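/- If R ⊆ P is α-selective and q ∈ S_{p,α} = {r ∈ P : d(r,p) < dne(r,P)/(1+α)} for some p ∈ P, then the nearest-enemy distances of p and q are related by ((1+α)/(2+α))·dne(p,P) ≤ dne(q,P) ≤ ((1+α)/α)·dne(p,P). -/

import Mathlib

open Metric

variable {X : Type*} [MetricSpace X]

/-- Nearest-neighbor distance of `q` in the set `S`. -/
noncomputable def dnn (q : X) (S : Finset X) : ℝ :=
  Metric.infDist q (S : Set X)

/-- Nearest-enemy distance of `q` in `S`, relative to the class `c`. -/
noncomputable def dne (l : X → ℕ) (c : ℕ) (q : X) (S : Finset X) : ℝ :=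
  Metric.infDist q {x ∈ (S : Set X) | l x ≠ c}

/-- if q ∈ S_{p,α}, i.e. d(q,p) < dne(q,P)/(1+α), then
((1+α)/(2+α))·dne(p,P) ≤ dne(q,P) ≤ ((1+α)/α)·dne(p,P). -/
theorem stmt8 (l : X → ℕ) (P R : Finset X) (α : ℝ) (p q : X)
    (hα : 0 < α) (hRP : R ⊆ P)
    (hclasses : ∃ a ∈ P, ∃ b ∈ P, l a ≠ l b)
    (hsel : ∀ x ∈ P, ∃ r ∈ R, l r = l x ∧ dist x r < dne l (l x) x P / (1 + α))
    (hp : p ∈ P) (hq : q ∈ P)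
    (hS : dist q p < dne l (l q) q P / (1 + α)) :
    (1 + α) / (2 + α) * dne l (l p) p P ≤ dne l (l q) q P ∧
      dne l (l q) q P ≤ (1 + α) / α * dne l (l p) p P := by
  have hα1 : (0:ℝ) < 1 + α := by linarith
  have hDq0 : 0 ≤ dne l (l q) q P := Metric.infDist_nonneg
  -- l p = l q
  have hlpq : l p = l q := by
    by_contra h
    have hmem : p ∈ {x ∈ (P : Set X) | l x ≠ l q} := ⟨hp, h⟩
    have h1 : dne l (l q) q P ≤ dist q p := Metric.infDist_le_dist_of_mem hmem
    have h2 : dne l (l q) q P / (1 + α) ≤ dne l (l q) q P :=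
      div_le_self hDq0 (by linarith)
    linarith
  rw [hlpq]
  set Dq := dne l (l q) q P with hDq
  set Dp := dne l (l q) p P with hDp
  have hDp0 : 0 ≤ Dp := Metric.infDist_nonneg
  have ht1 : Dp ≤ Dq + dist p q := by
    simpa [dne, Dp, Dq] using
      Metric.infDist_le_infDist_add_dist (x := p) (y := q)
        (s := {x ∈ (P : Set X) | l x ≠ l q})
  have ht2 : Dq ≤ Dp + dist q p := by
    simpa [dne, Dp, Dq] using
      Metric.infDist_le_infDist_add_dist (x := q) (y := p)
        (s := {x ∈ (P : Set X) | l x ≠ l q})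
  have hd : dist p q = dist q p := dist_comm p q
  have hkey : dist q p < Dq / (1 + α) := hS
  constructor
  · rw [div_mul_eq_mul_div, div_le_iff₀ (by linarith)]
    have : (1 + α) * Dp ≤ (1 + α) * (Dq + dist q p) := by nlinarith
    have h3 : (1 + α) * dist q p < Dq := by
      rwa [lt_div_iff₀ hα1, mul_comm] at hkey
    nlinarith
  · rw [div_mul_eq_mul_div, le_div_iff₀ hα]
    have h3 : (1 + α) * dist q p < Dq := by
      rwa [lt_div_iff₀ hα1, mul_comm] at hkey
    nlinarith
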